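/- For every multiset D of size k(k-1) (k ≥ 2), the number ζ_1(D) of ordered partitions of D into k disjoint ordered multisets each of size k-1 and the number ζ_2(D) of ordered partitions of D into k-1 disjoint ordered multisets each of size k satisfy ζ_1(D)/ζ_2(D) ≤ k^{k-1}/(k-1)!. -/

import Mathlib

open Multiset Finset

namespace Stmt18

variable {α : Type*} [DecidableEq α]

/-- Number of distinct submultisets of `E` of size `j`. -/
def SubC (E : Multiset α) (j : ℕ) : ℕ := ((Multiset.powersetCard j E).toFinset).card

/-- ℤ-indexed version of `SubC`. -/
def zf (E : Multiset α) (r : ℤ) : ℕ := if 0 ≤ r then SubC E r.toNat else 0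

lemma zf_neg {E : Multiset α} {r : ℤ} (h : r < 0) : zf E r = 0 := by
  simp [zf, not_le.mpr h]

lemma SubC_of_card_lt {E : Multiset α} {j : ℕ} (h : card E < j) : SubC E j = 0 := by
  have he : (powersetCard j E).toFinset = ∅ := by
    ext B
    simp only [Multiset.mem_toFinset, Multiset.mem_powersetCard, Finset.notMem_empty, iff_false]
    rintro ⟨hle, hc⟩
    have := Multiset.card_le_card hle
    omega
  simp [SubC, he]

-- fiber lemma: for j ≤ m := count x E, the set of submultisets of size s with count x = j
-- is in bijection with submultisets of F := E.filter (· ≠ x) of size s - j.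
lemma fiber_card (E : Multiset α) (x : α) {j s : ℕ} (hj : j ≤ count x E) :
    ({B ∈ (powersetCard s E).toFinset | count x B = j}).card
      = zf (E.filter (· ≠ x)) ((s : ℤ) - j) := by
  set F := E.filter (· ≠ x) with hF
  have hEsplit : F + replicate (count x E) x = E := by
    have h1 := Multiset.filter_add_not (fun a => a ≠ x) E
    have h2 : E.filter (fun a => ¬ a ≠ x) = E.filter (· = x) := by
      apply Multiset.filter_congr; intro a _; simp
    rw [h2, Multiset.filter_eq'] at h1
    exact h1
  by_cases hjs : j ≤ s
  · have hz : zf F ((s : ℤ) - j) = SubC F (s - j) := by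
      have : ((s : ℤ) - j) = ((s - j : ℕ) : ℤ) := by omega
      rw [this]; simp [zf]
    rw [hz]
    unfold SubC
    refine Finset.card_nbij' (fun B => B.filter (· ≠ x)) (fun B' => B' + replicate j x)
      ?_ ?_ ?_ ?_
    · intro B hB
      simp only [Finset.mem_coe, Finset.mem_filter, Multiset.mem_toFinset, Multiset.mem_powersetCard] at hB ⊢
      obtain ⟨⟨hle, hcard⟩, hcnt⟩ := hB
      constructor
      · exact Multiset.filter_le_filter _ hle
      · have h1 := Multiset.filter_add_not (fun a => a ≠ x) B
        have h2 : B.filter (fun a => ¬ a ≠ x) = replicate j x := by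
          have : B.filter (fun a => ¬ a ≠ x) = B.filter (· = x) := by
            apply Multiset.filter_congr; intro a _; simp
          rw [this, Multiset.filter_eq', hcnt]
        have h3 := congrArg Multiset.card h1
        rw [Multiset.card_add, h2, Multiset.card_replicate, hcard] at h3
        omega
    · intro B' hB'
      simp only [Finset.mem_coe, Finset.mem_filter, Multiset.mem_toFinset, Multiset.mem_powersetCard] at hB' ⊢
      obtain ⟨hle, hcard⟩ := hB'
      have hxnot : count x B' = 0 := by
        have : count x B' ≤ count x F := Multiset.count_le_of_le x hle
        have : count x F = 0 := by
          simp [hF, Multiset.count_filter]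
        omega
      refine ⟨⟨?_, ?_⟩, ?_⟩
      · calc B' + replicate j x ≤ F + replicate (count x E) x := by
              exact add_le_add hle ((Multiset.replicate_le_replicate x).2 hj)
          _ = E := hEsplit
      · rw [Multiset.card_add, Multiset.card_replicate, hcard]; omega
      · rw [Multiset.count_add, hxnot, Multiset.count_replicate_self]
        omega
    · intro B hB
      simp only [Finset.mem_coe, Finset.mem_filter, Multiset.mem_toFinset, Multiset.mem_powersetCard] at hB
      obtain ⟨⟨hle, hcard⟩, hcnt⟩ := hB
      have h1 := Multiset.filter_add_not (fun a => a ≠ x) B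
      have h2 : B.filter (fun a => ¬ a ≠ x) = replicate j x := by
        have : B.filter (fun a => ¬ a ≠ x) = B.filter (· = x) := by
          apply Multiset.filter_congr; intro a _; simp
        rw [this, Multiset.filter_eq', hcnt]
      rw [h2] at h1; exact h1
    · intro B' hB'
      simp only [Finset.mem_coe, Multiset.mem_toFinset, Multiset.mem_powersetCard] at hB'
      obtain ⟨hle, hcard⟩ := hB'
      show (B' + replicate j x).filter (· ≠ x) = B'
      rw [Multiset.filter_add]
      have h1 : B'.filter (· ≠ x) = B' := by
        rw [Multiset.filter_eq_self]
        intro a ha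
        intro haeq
        have : a ∈ F := Multiset.mem_of_le hle ha
        rw [hF, Multiset.mem_filter] at this
        exact this.2 haeq
      have h2 : (replicate j x).filter (· ≠ x) = 0 := by
        rw [Multiset.filter_eq_nil]
        intro a ha
        have := Multiset.eq_of_mem_replicate ha
        simp [this]
      rw [h1, h2, add_zero]
  · -- j > s: fiber is empty and rhs is zero
    have he : ({B ∈ (powersetCard s E).toFinset | count x B = j}) = ∅ := by
      ext B
      simp only [Finset.mem_filter, Multiset.mem_toFinset, Multiset.mem_powersetCard,
        Finset.notMem_empty, iff_false]
      rintro ⟨⟨hle, hcard⟩, hcnt⟩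
      have := Multiset.count_le_card x B
      omega
    rw [he]
    have : ((s : ℤ) - j) < 0 := by omega
    simp [zf, not_le.mpr this, hjs]

-- window identity
lemma window (E : Multiset α) (x : α) (r : ℤ) :
    zf E r = ∑ i ∈ Finset.range (count x E + 1), zf (E.filter (· ≠ x)) (r - i) := by
  rcases lt_or_ge r 0 with hr | hr
  · rw [zf, if_neg (not_le.mpr hr)]
    symm
    apply Finset.sum_eq_zero
    intro i _
    rw [zf, if_neg]
    omega
  · have hr' : ((r.toNat : ℤ)) = r := Int.toNat_of_nonneg hr
    rw [zf, if_pos hr]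
    unfold SubC
    rw [Finset.card_eq_sum_card_fiberwise
      (f := fun B => count x B) (t := Finset.range (count x E + 1)) ?_]
    · apply Finset.sum_congr rfl
      intro j hj
      simp only [Finset.mem_range] at hj
      rw [fiber_card E x (by omega)]
      congr 1
      omega
    · intro B hB
      simp only [Finset.mem_coe, Multiset.mem_toFinset, Multiset.mem_powersetCard] at hB
      simp only [Finset.mem_coe, Finset.mem_range]
      have := Multiset.count_le_of_le x hB.1
      omega


def Sym (E : Multiset α) : Prop := ∀ r : ℤ, zf E r = zf E ((card E : ℤ) - r)
def Mono (E : Multiset α) : Prop :=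
    ∀ r : ℤ, 1 ≤ r → 2*r ≤ (card E : ℤ) + 1 → zf E (r-1) ≤ zf E r

lemma filter_ne_add_replicate (E : Multiset α) (x : α) :
    E.filter (· ≠ x) + replicate (count x E) x = E := by
  have h1 := Multiset.filter_add_not (fun a => a ≠ x) E
  have h2 : E.filter (fun a => ¬ a ≠ x) = E.filter (· = x) := by
    apply Multiset.filter_congr; intro a _; simp
  rw [h2, Multiset.filter_eq'] at h1
  exact h1

lemma card_filter_ne (E : Multiset α) (x : α) :
    card (E.filter (· ≠ x)) + count x E = card E := by
  conv_rhs => rw [← filter_ne_add_replicate E x]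
  rw [Multiset.card_add, Multiset.card_replicate]

lemma mono_chain (E : Multiset α) (hM : Mono E) :
    ∀ p q : ℤ, 0 ≤ p → p ≤ q → 2*q ≤ (card E : ℤ) + 1 → zf E p ≤ zf E q := by
  intro p q hp hpq
  obtain ⟨d, rfl⟩ : ∃ d : ℕ, q = p + d := ⟨(q - p).toNat, by omega⟩
  clear hpq
  induction d with
  | zero => intro _; simp
  | succ d ihd =>
    intro h2q
    have hcast : ((d+1:ℕ):ℤ) = (d:ℤ)+1 := by push_cast; ring
    rw [hcast] at h2q ⊢
    have hd : zf E p ≤ zf E (p + (d:ℤ)) := ihd (by omega)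
    have step : zf E (p + (d:ℤ)) ≤ zf E (p + (d:ℤ) + 1) := by
      have := hM (p + (d:ℤ) + 1) (by omega) (by omega)
      have harg : p + (d:ℤ) + 1 - 1 = p + (d:ℤ) := by ring
      rwa [harg] at this
    have hfin : p + ((d:ℤ) + 1) = p + (d:ℤ) + 1 := by ring
    rw [hfin]
    exact le_trans hd step

lemma U_of (E : Multiset α) (hS : Sym E) (hM : Mono E) :
    ∀ p q : ℤ, p ≤ q → p + q ≤ (card E : ℤ) → zf E p ≤ zf E q := by
  intro p q hpq hsum
  rcases lt_or_ge p 0 with hp | hp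
  · rw [zf_neg hp]; exact Nat.zero_le _
  rcases le_or_gt (2*q) ((card E : ℤ) + 1) with h | h
  · exact mono_chain E hM p q hp hpq h
  · rw [hS q]
    exact mono_chain E hM p ((card E : ℤ) - q) hp (by omega) (by omega)

lemma symMono : ∀ (E : Multiset α), Sym E ∧ Mono E := by
  suffices H : ∀ (n : ℕ) (E : Multiset α), card E = n → Sym E ∧ Mono E from
    fun E => H _ E rfl
  intro n
  induction n using Nat.strong_induction_on with
  | _ n ih =>
    intro E hE
    rcases eq_or_ne E 0 with rfl | hne
    · have zf_zero : ∀ r : ℤ, zf (0 : Multiset α) r = if r = 0 then 1 else 0 := by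
        intro r
        rcases lt_trichotomy r 0 with h | h | h
        · rw [zf_neg h, if_neg (by omega)]
        · subst h
          simp [zf, SubC, Multiset.powersetCard_zero_left]
        · rw [if_neg (by omega), zf, if_pos (by omega),
            SubC_of_card_lt (by simp; omega)]
      constructor
      · intro r
        simp only [Multiset.card_zero, Nat.cast_zero, zero_sub]
        rw [zf_zero, zf_zero]
        by_cases h : r = 0
        · subst h; norm_num
        · rw [if_neg h, if_neg (by omega)]
      · intro r h1 h2
        simp only [Multiset.card_zero, Nat.cast_zero] at h2
        omega
    · obtain ⟨x, hx⟩ := Multiset.exists_mem_of_ne_zero hne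
      set F := E.filter (· ≠ x) with hF
      set m := count x E with hm
      have hm1 : 1 ≤ m := Multiset.one_le_count_iff_mem.2 hx
      have hcard : card F + m = card E := card_filter_ne E x
      obtain ⟨hSF, hMF⟩ := ih (card F) (by omega) F rfl
      have hUF := U_of F hSF hMF
      constructor
      · -- Sym E
        intro r
        rw [window E x r, window E x ((card E : ℤ) - r), ← hF, ← hm]
        conv_rhs => rw [← Finset.sum_range_reflect
          (fun j : ℕ => zf F ((card E : ℤ) - r - j)) (m+1)]
        apply Finset.sum_congr rfl
        intro i hi
        simp only [Finset.mem_range] at hi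
        rw [hSF (r - i)]
        congr 1
        omega
      · -- Mono E
        intro r h1 h2
        rw [window E x r, window E x (r - 1), ← hF, ← hm]
        rw [Finset.sum_range_succ, Finset.sum_range_succ' (fun i : ℕ => zf F (r - i)) m]
        have e3 : (∑ i ∈ Finset.range m, zf F (r - 1 - ↑i))
            = ∑ i ∈ Finset.range m, zf F (r - ↑(i+1)) := by
          apply Finset.sum_congr rfl
          intro i _
          congr 1
          push_cast
          ring
        rw [e3]
        have e4 : zf F (r - 1 - ↑m) ≤ zf F (r - (0:ℕ)) := by
          apply hUF
          · omega
          · push_cast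
            omega
        omega

lemma delta_nonneg (F : Multiset α)
    (hU : ∀ p q : ℤ, p ≤ q → p + q ≤ (card F : ℤ) → zf F p ≤ zf F q)
    (m : ℕ) (s : ℤ) (hs : 2*s ≤ (card F : ℤ) + m - 1) :
    0 ≤ ∑ j ∈ Finset.range m, ((m:ℤ) - 1 - 2*j) * (zf F (s - j) : ℤ) := by
  set S0 := ∑ j ∈ Finset.range m, ((m:ℤ) - 1 - 2*j) * (zf F (s - j) : ℤ) with hseq
  have hrefl : S0 = ∑ j ∈ Finset.range m,
      ((m:ℤ) - 1 - 2*((m:ℤ)-1-j)) * (zf F (s - ((m:ℤ)-1-j)) : ℤ) := by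
    rw [hseq, ← Finset.sum_range_reflect
      (fun j : ℕ => ((m:ℤ) - 1 - 2*j) * (zf F (s - j) : ℤ)) m]
    apply Finset.sum_congr rfl
    intro i hi
    simp only [Finset.mem_range] at hi
    have hc : ((m - 1 - i : ℕ) : ℤ) = (m:ℤ) - 1 - i := by omega
    rw [hc]
  have h2 : 2 * S0 = ∑ j ∈ Finset.range m,
      ((m:ℤ) - 1 - 2*j) * ((zf F (s - j) : ℤ) - (zf F (s - ((m:ℤ)-1-j)) : ℤ)) := by
    rw [two_mul]
    nth_rewrite 2 [hrefl]
    rw [← Finset.sum_add_distrib]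
    apply Finset.sum_congr rfl
    intro i _
    ring
  have hterm : ∀ j ∈ Finset.range m,
      0 ≤ ((m:ℤ) - 1 - 2*j) * ((zf F (s - j) : ℤ) - (zf F (s - ((m:ℤ)-1-j)) : ℤ)) := by
    intro j hj
    simp only [Finset.mem_range] at hj
    rcases le_or_gt (2*(j:ℤ)) ((m:ℤ)-1) with hc | hc
    · apply mul_nonneg (by omega)
      have := hU (s - ((m:ℤ)-1-j)) (s - j) (by omega) (by omega)
      simp only [sub_nonneg]
      exact_mod_cast this
    · have hring : ((m:ℤ) - 1 - 2*j) * ((zf F (s - j) : ℤ) - (zf F (s - ((m:ℤ)-1-j)) : ℤ))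
          = (2*(j:ℤ) - ((m:ℤ)-1)) * ((zf F (s - ((m:ℤ)-1-j)) : ℤ) - (zf F (s - j) : ℤ)) := by
        ring
      rw [hring]
      apply mul_nonneg (by omega)
      have := hU (s - j) (s - ((m:ℤ)-1-j)) (by omega) (by omega)
      simp only [sub_nonneg]
      exact_mod_cast this
  have hsum := Finset.sum_nonneg hterm
  rw [← h2] at hsum
  linarith


lemma U_all (F : Multiset α) :
    ∀ p q : ℤ, p ≤ q → p + q ≤ (card F : ℤ) → zf F p ≤ zf F q :=
  U_of F (symMono F).1 (symMono F).2

lemma card_eq_sum_count_nat (E A : Multiset α) (h : A ≤ E) :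
    card A = ∑ x ∈ E.toFinset, count x A := by
  have h1 : ∑ x ∈ A.toFinset, count x A = card A := Multiset.toFinset_sum_count_eq A
  have h2 : ∑ x ∈ E.toFinset, count x A = ∑ x ∈ A.toFinset, count x A := by
    symm
    apply Finset.sum_subset
    · exact Multiset.toFinset_subset.2 (Multiset.subset_of_le h)
    · intro x _ hx
      exact Multiset.count_eq_zero.2 (fun hc => hx (Multiset.mem_toFinset.2 hc))
  omega

/-- per-x fiberwise weighted sum -/
lemma sum_phi_powersetCard (E : Multiset α) (x : α) (s : ℕ) (φ : ℕ → ℤ) :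
    (∑ B ∈ (powersetCard s E).toFinset, φ (count x B))
      = ∑ j ∈ Finset.range (count x E + 1),
          φ j * (zf (E.filter (· ≠ x)) ((s:ℤ) - j) : ℤ) := by
  rw [← Finset.sum_fiberwise_of_maps_to (g := fun B => count x B)
    (t := Finset.range (count x E + 1)) ?_ (fun B => φ (count x B))]
  · apply Finset.sum_congr rfl
    intro j hj
    simp only [Finset.mem_range] at hj
    have hc : ∀ B ∈ ({B ∈ (powersetCard s E).toFinset | count x B = j}),
        φ (count x B) = φ j := by
      intro B hB
      simp only [Finset.mem_filter] at hB
      rw [hB.2]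
    rw [Finset.sum_congr rfl hc, Finset.sum_const, fiber_card E x (by omega)]
    rw [nsmul_eq_mul, mul_comm]
  · intro B hB
    simp only [Multiset.mem_toFinset, Multiset.mem_powersetCard] at hB
    simp only [Finset.mem_range]
    have := Multiset.count_le_of_le x hB.1
    omega

lemma key (E : Multiset α) (s : ℕ) (h : 2*s + 1 ≤ card E) :
    (s+1) * SubC E (s+1) ≤ (card E - s) * SubC E s := by
  have hscard : s ≤ card E := by omega
  zify [hscard]
  -- LHS as a sum over submultisets of size s+1
  have hconst1 : ∀ A ∈ (powersetCard (s+1) E).toFinset, (card A : ℤ) = (s:ℤ)+1 := by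
    intro A hA
    simp only [Multiset.mem_toFinset, Multiset.mem_powersetCard] at hA
    rw [hA.2]
    push_cast
    ring
  have lhs_eq : ((s:ℤ)+1) * (SubC E (s+1) : ℤ)
      = ∑ A ∈ (powersetCard (s+1) E).toFinset, (card A : ℤ) := by
    rw [Finset.sum_congr rfl hconst1, Finset.sum_const, nsmul_eq_mul]
    simp only [SubC]
    ring
  have hconst2 : ∀ B ∈ (powersetCard s E).toFinset,
      ((card E : ℤ) - (card B : ℤ)) = (card E : ℤ) - s := by
    intro B hB
    simp only [Multiset.mem_toFinset, Multiset.mem_powersetCard] at hB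
    rw [hB.2]
  have rhs_eq : ((card E : ℤ) - s) * (SubC E s : ℤ)
      = ∑ B ∈ (powersetCard s E).toFinset, ((card E : ℤ) - (card B : ℤ)) := by
    rw [Finset.sum_congr rfl hconst2, Finset.sum_const, nsmul_eq_mul]
    simp only [SubC]
    ring
  rw [lhs_eq, rhs_eq]
  -- expand both as double sums over x ∈ E.toFinset
  have lhs2 : ∑ A ∈ (powersetCard (s+1) E).toFinset, (card A : ℤ)
      = ∑ x ∈ E.toFinset, ∑ A ∈ (powersetCard (s+1) E).toFinset, (count x A : ℤ) := by
    rw [← Finset.sum_comm]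
    apply Finset.sum_congr rfl
    intro A hA
    simp only [Multiset.mem_toFinset, Multiset.mem_powersetCard] at hA
    rw [card_eq_sum_count_nat E A hA.1]
    push_cast
    rfl
  have rhs2 : ∑ B ∈ (powersetCard s E).toFinset, ((card E : ℤ) - (card B : ℤ))
      = ∑ x ∈ E.toFinset, ∑ B ∈ (powersetCard s E).toFinset,
          ((count x E : ℤ) - (count x B : ℤ)) := by
    rw [← Finset.sum_comm]
    apply Finset.sum_congr rfl
    intro B hB
    simp only [Multiset.mem_toFinset, Multiset.mem_powersetCard] at hB
    rw [Finset.sum_sub_distrib]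
    congr 1
    · rw [card_eq_sum_count_nat E E (le_refl E)]; push_cast; rfl
    · rw [card_eq_sum_count_nat E B hB.1]; push_cast; rfl
  rw [lhs2, rhs2]
  apply Finset.sum_le_sum
  intro x hx
  set F := E.filter (· ≠ x) with hF
  set m := count x E with hm
  have hcard : card F + m = card E := card_filter_ne E x
  -- fiberwise expansions
  have lx := sum_phi_powersetCard E x (s+1) (fun j => (j:ℤ))
  have rx := sum_phi_powersetCard E x s (fun j => (m:ℤ) - j)
  rw [← hF, ← hm] at lx rx
  rw [lx, rx]
  have lstep : (∑ j ∈ Finset.range (m+1), (j:ℤ) * (zf F (((s+1:ℕ):ℤ) - j) : ℤ))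
      = ∑ j ∈ Finset.range m, ((j:ℤ)+1) * (zf F ((s:ℤ) - j) : ℤ) := by
    rw [Finset.sum_range_succ' (fun j : ℕ => (j:ℤ) * (zf F (((s+1:ℕ):ℤ) - j) : ℤ)) m]
    simp only [Nat.cast_zero, zero_mul, add_zero]
    apply Finset.sum_congr rfl
    intro j hj
    have harg : ((s+1:ℕ):ℤ) - ((j+1:ℕ):ℤ) = (s:ℤ) - j := by push_cast; ring
    rw [harg]
    push_cast
    ring
  have rstep : (∑ j ∈ Finset.range (m+1), ((m:ℤ) - j) * (zf F ((s:ℤ) - j) : ℤ))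
      = ∑ j ∈ Finset.range m, ((m:ℤ) - j) * (zf F ((s:ℤ) - j) : ℤ) := by
    rw [Finset.sum_range_succ]
    simp
  rw [lstep, rstep]
  have hdelta := delta_nonneg F (U_all F) m (s:ℤ) (by
    have : (card F : ℤ) + m = card E := by exact_mod_cast hcard
    omega)
  have hdiff : (∑ j ∈ Finset.range m, ((m:ℤ) - j) * (zf F ((s:ℤ) - j) : ℤ))
      - (∑ j ∈ Finset.range m, ((j:ℤ)+1) * (zf F ((s:ℤ) - j) : ℤ))
      = ∑ j ∈ Finset.range m, ((m:ℤ) - 1 - 2*j) * (zf F ((s:ℤ) - j) : ℤ) := by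
    rw [← Finset.sum_sub_distrib]
    apply Finset.sum_congr rfl
    intro j _
    ring
  linarith


def XS (D : Multiset α) {n : ℕ} (c : Fin n → ℕ) : Finset (Fin n → Multiset α) :=
  (Fintype.piFinset fun _ => (Multiset.powerset D).toFinset).filter
    (fun f => (∀ t, card (f t) = c t) ∧ ∑ t, f t = D)

lemma mem_XS {D : Multiset α} {n : ℕ} {c : Fin n → ℕ} {f : Fin n → Multiset α} :
    f ∈ XS D c ↔ (∀ t, card (f t) = c t) ∧ ∑ t, f t = D := by
  constructor
  · intro hf; exact (Finset.mem_filter.1 hf).2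
  · intro hf
    refine Finset.mem_filter.2 ⟨?_, hf⟩
    rw [Fintype.mem_piFinset]
    intro t
    rw [Multiset.mem_toFinset, Multiset.mem_powerset, ← hf.2]
    exact Finset.single_le_sum (f := f) (fun i _ => Multiset.zero_le _) (Finset.mem_univ t)

lemma sum_split {M : Type*} [AddCommMonoid M] {n : ℕ} (f : Fin n → M) (u v : Fin n)
    (huv : u ≠ v) :
    ∑ t, f t = f u + f v + ∑ t ∈ (Finset.univ.erase v).erase u, f t := by
  rw [← Finset.add_sum_erase _ f (Finset.mem_univ v),
    ← Finset.add_sum_erase _ f (Finset.mem_erase.2 ⟨huv, Finset.mem_univ u⟩)]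
  abel

lemma sum_update_two {M : Type*} [AddCommMonoid M] {n : ℕ} (f : Fin n → M) (u v : Fin n)
    (huv : u ≠ v) (a b : M) :
    ∑ t, Function.update (Function.update f u a) v b t
      = a + b + ∑ t ∈ (Finset.univ.erase v).erase u, f t := by
  rw [sum_split _ u v huv]
  have h1 : Function.update (Function.update f u a) v b u = a := by
    rw [Function.update_of_ne huv, Function.update_self]
  have h2 : Function.update (Function.update f u a) v b v = b := Function.update_self _ _ _
  rw [h1, h2]
  congr 1
  apply Finset.sum_congr rfl
  intro t ht
  simp only [Finset.mem_erase] at ht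
  rw [Function.update_of_ne ht.2.1, Function.update_of_ne ht.1]

lemma move (D : Multiset α) {n : ℕ} (c : Fin n → ℕ) (u v : Fin n) (huv : u ≠ v)
    (h1 : 1 ≤ c u) (h2 : c u ≤ c v + 1) :
    c u * (XS D c).card
      ≤ (c v + 1) * (XS D (Function.update (Function.update c u (c u - 1)) v (c v + 1))).card := by
  set c' : Fin n → ℕ := Function.update (Function.update c u (c u - 1)) v (c v + 1) with hc'
  set c'' : Fin n → ℕ := Function.update (Function.update c u 0) v (c u + c v) with hc''
  set β : (Fin n → Multiset α) → (Fin n → Multiset α) :=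
    fun f => Function.update (Function.update f u 0) v (f u + f v) with hβ
  have hc''u : c'' u = 0 := by
    rw [hc'', Function.update_of_ne huv, Function.update_self]
  have hc''v : c'' v = c u + c v := by rw [hc'', Function.update_self]
  have hc''t : ∀ t, t ≠ u → t ≠ v → c'' t = c t := by
    intro t htu htv
    rw [hc'', Function.update_of_ne htv, Function.update_of_ne htu]
  have hβu : ∀ f, β f u = 0 := by
    intro f; rw [hβ]; simp only
    rw [Function.update_of_ne huv, Function.update_self]
  have hβv : ∀ f, β f v = f u + f v := by
    intro f; rw [hβ]; simp only [Function.update_self]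
  have hβt : ∀ f t, t ≠ u → t ≠ v → β f t = f t := by
    intro f t htu htv; rw [hβ]; simp only
    rw [Function.update_of_ne htv, Function.update_of_ne htu]
  -- generic facts for cc ∈ {c, c'}
  have hmapsGen : ∀ (cc : Fin n → ℕ), (∀ t, t ≠ u → t ≠ v → cc t = c t) →
      (cc u + cc v = c u + c v) → ∀ f ∈ XS D cc, β f ∈ XS D c'' := by
    intro cc hrest hsum f hf
    obtain ⟨hcardf, hsumf⟩ := mem_XS.1 hf
    apply mem_XS.2
    constructor
    · intro t
      by_cases htv : t = v
      · rw [htv]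
        rw [hβv, hc''v, Multiset.card_add, hcardf u, hcardf v, hsum]
      · by_cases htu : t = u
        · rw [htu]
          rw [hβu, hc''u, Multiset.card_zero]
        · rw [hβt f t htu htv, hc''t t htu htv, hcardf t, hrest t htu htv]
    · rw [hβ]
      simp only
      rw [sum_update_two f u v huv 0 (f u + f v)]
      rw [sum_split f u v huv] at hsumf
      rw [← hsumf]
      abel
  have hfibGen : ∀ (cc : Fin n → ℕ), (∀ t, t ≠ u → t ≠ v → cc t = c t) →
      (cc u + cc v = c u + c v) →
      ∀ g ∈ XS D c'', ((XS D cc).filter (fun f => β f = g)).card = SubC (g v) (cc u) := by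
    intro cc hrest hsum g hg
    obtain ⟨hcardg, hsumg⟩ := mem_XS.1 hg
    have hgu : g u = 0 := by
      have := hcardg u
      rw [hc''u] at this
      exact Multiset.card_eq_zero.1 this
    have hgv : card (g v) = c u + c v := by
      have := hcardg v
      rwa [hc''v] at this
    unfold SubC
    apply Finset.card_nbij' (i := fun f => f u)
      (j := fun A => Function.update (Function.update g v (g v - A)) u A)
    · intro f hf
      obtain ⟨hfX, hfβ⟩ := Finset.mem_filter.1 hf
      obtain ⟨hcardf, hsumf⟩ := mem_XS.1 hfX
      rw [Finset.mem_coe, Multiset.mem_toFinset, Multiset.mem_powersetCard]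
      have hfv : f u + f v = g v := by rw [← hβv f, hfβ]
      constructor
      · rw [← hfv]; exact Multiset.le_add_right _ _
      · exact hcardf u
    · intro A hA
      beta_reduce
      rw [Finset.mem_coe, Multiset.mem_toFinset, Multiset.mem_powersetCard] at hA
      obtain ⟨hAle, hAcard⟩ := hA
      have hvu : v ≠ u := fun h => huv h.symm
      have hjv : Function.update (Function.update g v (g v - A)) u A v = g v - A := by
        rw [Function.update_of_ne hvu, Function.update_self]
      have hju : Function.update (Function.update g v (g v - A)) u A u =
          A := Function.update_self _ _ _
      have hjt : ∀ t, t ≠ u → t ≠ v → Function.update (Function.update g v (g v - A)) u A t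
          = g t := by
        intro t htu htv
        rw [Function.update_of_ne htu, Function.update_of_ne htv]
      apply Finset.mem_filter.2
      refine ⟨mem_XS.2 ⟨?_, ?_⟩, ?_⟩
      · intro t
        by_cases htu : t = u
        · rw [htu, hju]; exact hAcard
        · by_cases htv : t = v
          · rw [htv]
            rw [hjv, Multiset.card_sub hAle, hgv, hAcard]
            omega
          · rw [hjt t htu htv, hcardg t, hc''t t htu htv, hrest t htu htv]
      · rw [sum_update_two g v u hvu (g v - A) A]
        rw [sum_split g v u hvu] at hsumg
        rw [← hsumg, hgu, tsub_add_cancel_of_le hAle]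
        abel
      · funext t
        by_cases htv : t = v
        · rw [htv]
          rw [hβv, hju, hjv, add_tsub_cancel_of_le hAle]
        · by_cases htu : t = u
          · rw [htu]
            rw [hβu, hgu]
          · rw [hβt _ t htu htv, hjt t htu htv]
    · intro f hf
      beta_reduce
      obtain ⟨hfX, hfβ⟩ := Finset.mem_filter.1 hf
      have hfv : f u + f v = g v := by rw [← hβv f, hfβ]
      funext t
      by_cases htu : t = u
      · rw [htu]; rw [Function.update_self]
      · by_cases htv : t = v
        · rw [htv]
          rw [Function.update_of_ne (fun h => huv h.symm), Function.update_self, ← hfv,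
            add_tsub_cancel_left]
        · rw [Function.update_of_ne htu, Function.update_of_ne htv, ← hβt f t htu htv, hfβ]
    · intro A hA
      beta_reduce
      rw [Function.update_self]
  have hcount1 : (XS D c).card = ∑ g ∈ XS D c'', SubC (g v) (c u) := by
    rw [Finset.card_eq_sum_card_fiberwise (f := β) (t := XS D c'')
      (hmapsGen c (fun _ _ _ => rfl) rfl)]
    exact Finset.sum_congr rfl (fun g hg => hfibGen c (fun _ _ _ => rfl) rfl g hg)
  have hc'rest : ∀ t, t ≠ u → t ≠ v → c' t = c t := by
    intro t htu htv
    rw [hc', Function.update_of_ne htv, Function.update_of_ne htu]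
  have hc'u : c' u = c u - 1 := by
    rw [hc', Function.update_of_ne huv, Function.update_self]
  have hc'v : c' v = c v + 1 := by rw [hc', Function.update_self]
  have hc'sum : c' u + c' v = c u + c v := by rw [hc'u, hc'v]; clear hβ hmapsGen hfibGen hcount1; omega
  have hcount2 : (XS D c').card = ∑ g ∈ XS D c'', SubC (g v) (c u - 1) := by
    rw [Finset.card_eq_sum_card_fiberwise (f := β) (t := XS D c'')
      (hmapsGen c' hc'rest hc'sum)]
    refine Finset.sum_congr rfl (fun g hg => ?_)
    rw [hfibGen c' hc'rest hc'sum g hg, hc'u]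
  rw [hcount1, hcount2, Finset.mul_sum, Finset.mul_sum]
  apply Finset.sum_le_sum
  intro g hg
  obtain ⟨hcardg, hsumg⟩ := mem_XS.1 hg
  have hgv : card (g v) = c u + c v := by
    have := hcardg v
    rwa [hc''v] at this
  have hk := key (g v) (c u - 1) (by rw [hgv]; clear hβ hmapsGen hfibGen hcount1 hcount2 hsumg hcardg; omega)
  rw [hgv] at hk
  have e1 : c u - 1 + 1 = c u := by clear hβ hmapsGen hfibGen hcount1 hcount2 hsumg hcardg; omega
  have e2 : c u + c v - (c u - 1) = c v + 1 := by clear hβ hmapsGen hfibGen hcount1 hcount2 hsumg hcardg; omega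
  rw [e1, e2] at hk
  exact hk


def cc (K : ℕ) (i : ℕ) : Fin (K+1) → ℕ :=
  fun t => if (t:ℕ) < i then K+1 else if (t:ℕ) = K then K - i else K

lemma chain (D : Multiset α) (K : ℕ) : ∀ i ≤ K,
    Nat.factorial K * (XS D (cc K 0)).card
      ≤ Nat.factorial (K - i) * (K+1)^i * (XS D (cc K i)).card := by
  intro i
  induction i with
  | zero =>
    intro _
    simp
  | succ i ih =>
    intro hi
    have hik : i < K := by omega
    set u : Fin (K+1) := Fin.last K with hu
    set v : Fin (K+1) := ⟨i, by omega⟩ with hv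
    have huv : u ≠ v := by
      rw [hu, hv, Fin.ne_iff_vne]
      simp [Fin.val_last]
      omega
    have hcu : cc K i u = K - i := by
      rw [hu]
      show (if (K:ℕ) < i then K+1 else if (K:ℕ) = K then K - i else K) = K - i
      rw [if_neg (by omega), if_pos rfl]
    have hcv : cc K i v = K := by
      rw [hv]
      show (if i < i then K+1 else if i = K then K - i else K) = K
      rw [if_neg (by omega), if_neg (by omega)]
    have hstep := move D (cc K i) u v huv (by omega) (by omega)
    rw [hcu, hcv] at hstep
    have hupd : Function.update (Function.update (cc K i) u (K - i - 1)) v (K + 1)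
        = cc K (i+1) := by
      funext t
      by_cases htv : t = v
      · rw [htv, Function.update_self]
        show K + 1 = if i < i + 1 then K+1 else if i = K then K - (i+1) else K
        rw [if_pos (by omega)]
      · rw [Function.update_of_ne htv]
        by_cases htu : t = u
        · rw [htu, Function.update_self]
          show K - i - 1 = if (K:ℕ) < i + 1 then K+1 else if (K:ℕ) = K then K - (i+1) else K
          rw [if_neg (by omega), if_pos rfl]
          omega
        · rw [Function.update_of_ne htu]
          have ht1 : (t:ℕ) ≠ i := by
            intro h
            exact htv (Fin.ext (by rw [h, hv]))
          have ht2 : (t:ℕ) ≠ K := by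
            intro h
            exact htu (Fin.ext (by rw [h, hu, Fin.val_last]))
          show (if (t:ℕ) < i then K+1 else if (t:ℕ) = K then K - i else K)
              = (if (t:ℕ) < i + 1 then K+1 else if (t:ℕ) = K then K - (i+1) else K)
          rw [if_neg ht2, if_neg ht2]
          by_cases hlt : (t:ℕ) < i
          · rw [if_pos hlt, if_pos (by omega)]
          · simp only [if_neg hlt, if_neg (show ¬ (t:ℕ) < i+1 by omega), if_neg ht2]
    rw [hupd] at hstep
    have hfact : (K - i).factorial = (K - i) * (K - (i+1)).factorial := by
      have h' : K - i = (K - (i+1)) + 1 := by omega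
      rw [h', Nat.factorial_succ]
    calc Nat.factorial K * (XS D (cc K 0)).card
        ≤ Nat.factorial (K - i) * (K+1)^i * (XS D (cc K i)).card := ih (by omega)
      _ = ((K - (i+1)).factorial * (K+1)^i) * ((K - i) * (XS D (cc K i)).card) := by
          rw [hfact]; ring
      _ ≤ ((K - (i+1)).factorial * (K+1)^i) * ((K+1) * (XS D (cc K (i+1))).card) :=
          Nat.mul_le_mul_left _ hstep
      _ = (K - (i+1)).factorial * (K+1)^(i+1) * (XS D (cc K (i+1))).card := by ring

lemma card_XS_eq_natCard (D : Multiset α) {n : ℕ} (c : Fin n → ℕ) :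
    Nat.card {f : Fin n → Multiset α // (∀ t, card (f t) = c t) ∧ ∑ t, f t = D}
      = (XS D c).card := by
  have he : {f : Fin n → Multiset α // (∀ t, card (f t) = c t) ∧ ∑ t, f t = D}
      ≃ {f // f ∈ XS D c} := Equiv.subtypeEquivRight (fun f => mem_XS.symm)
  rw [Nat.card_congr he, Nat.card_eq_finsetCard]

lemma cc_zero_val (K : ℕ) (t : Fin (K+1)) : cc K 0 t = K := by
  show (if (t:ℕ) < 0 then K+1 else if (t:ℕ) = K then K - 0 else K) = K
  rw [if_neg (by omega)]
  by_cases h : (t:ℕ) = K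
  · rw [if_pos h, Nat.sub_zero]
  · rw [if_neg h]

lemma zeta1_eq (D : Multiset α) (K : ℕ) :
    Nat.card {f : Fin (K+1) → Multiset α // (∀ t, card (f t) = K) ∧ ∑ t, f t = D}
      = (XS D (cc K 0)).card := by
  rw [← card_XS_eq_natCard D (cc K 0)]
  apply Nat.card_congr
  apply Equiv.subtypeEquivRight
  intro f
  constructor
  · rintro ⟨h1, h2⟩
    exact ⟨fun t => by rw [cc_zero_val]; exact h1 t, h2⟩
  · rintro ⟨h1, h2⟩
    exact ⟨fun t => by rw [← cc_zero_val K t]; exact h1 t, h2⟩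

lemma cc_K_castSucc (K : ℕ) (j : Fin K) : cc K K (Fin.castSucc j) = K + 1 := by
  simp only [cc, Fin.coe_castSucc]
  rw [if_pos j.isLt]

lemma cc_K_last (K : ℕ) : cc K K (Fin.last K) = 0 := by
  simp only [cc, Fin.val_last]
  simp

lemma zeta2_eq (D : Multiset α) (K : ℕ) :
    Nat.card {g : Fin K → Multiset α // (∀ t, card (g t) = K + 1) ∧ ∑ t, g t = D}
      = (XS D (cc K K)).card := by
  rw [← card_XS_eq_natCard D (cc K K)]
  apply Nat.card_congr
  refine ⟨fun g => ⟨fun t => if h : (t:ℕ) < K then g.1 ⟨t, h⟩ else 0, ⟨?_, ?_⟩⟩,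
          fun f => ⟨fun j => f.1 (Fin.castSucc j), ⟨?_, ?_⟩⟩, ?_, ?_⟩
  · intro t
    show Multiset.card (if h : (t:ℕ) < K then g.1 ⟨t, h⟩ else 0) = cc K K t
    by_cases h : (t:ℕ) < K
    · rw [dif_pos h]
      have hc : cc K K t = K + 1 := by
        simp only [cc]; rw [if_pos h]
      rw [hc]; exact g.2.1 ⟨t, h⟩
    · rw [dif_neg h]
      have htlt := t.isLt
      have ht : (t:ℕ) = K := by omega
      have hc : cc K K t = 0 := by
        simp only [cc]; rw [if_neg h, if_pos ht, Nat.sub_self]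
      rw [hc, Multiset.card_zero]
  · rw [Fin.sum_univ_castSucc]
    have hlast : (if h : ((Fin.last K : Fin (K+1)):ℕ) < K
        then g.1 ⟨((Fin.last K : Fin (K+1)):ℕ), h⟩ else 0) = 0 := by
      rw [dif_neg]
      simp [Fin.val_last]
    rw [hlast, add_zero]
    have hterm : ∀ j : Fin K, (if h : ((Fin.castSucc j : Fin (K+1)):ℕ) < K
        then g.1 ⟨((Fin.castSucc j : Fin (K+1)):ℕ), h⟩ else 0) = g.1 j := by
      intro j
      rw [dif_pos (by simpa using j.isLt)]
      exact congrArg g.1 (Fin.ext (by simp))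
    rw [Finset.sum_congr rfl (fun j _ => hterm j)]
    exact g.2.2
  · intro j
    have := f.2.1 (Fin.castSucc j)
    rwa [cc_K_castSucc] at this
  · have hsum := f.2.2
    rw [Fin.sum_univ_castSucc] at hsum
    have hlast : f.1 (Fin.last K) = 0 := by
      have := f.2.1 (Fin.last K)
      rw [cc_K_last] at this
      exact Multiset.card_eq_zero.1 this
    rw [hlast, add_zero] at hsum
    exact hsum
  · intro g
    apply Subtype.ext
    funext j
    simp only
    rw [dif_pos (by simpa using j.isLt)]
    exact congrArg g.1 (Fin.ext (by simp))
  · intro f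
    apply Subtype.ext
    funext t
    simp only
    by_cases h : (t:ℕ) < K
    · rw [dif_pos h]
      exact congrArg f.1 (Fin.ext (by simp))
    · rw [dif_neg h]
      have htlt := t.isLt
      have ht : (t:ℕ) = K := by omega
      have hlt : t = Fin.last K := Fin.ext (by simp [Fin.val_last, ht])
      rw [hlt]
      symm
      have := f.2.1 (Fin.last K)
      rw [cc_K_last] at this
      exact Multiset.card_eq_zero.1 this

end Stmt18

theorem stmt_18 {α : Type*} (k : ℕ) (hk : 2 ≤ k) (D : Multiset α)
    (hD : Multiset.card D = k * (k - 1)) :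
    Nat.card {f : Fin k → Multiset α //
        (∀ t, Multiset.card (f t) = k - 1) ∧ ∑ t, f t = D} * (k - 1).factorial ≤
      Nat.card {f : Fin (k - 1) → Multiset α //
        (∀ t, Multiset.card (f t) = k) ∧ ∑ t, f t = D} * k ^ (k - 1) := by
  classical
  obtain ⟨K, rfl⟩ : ∃ K, k = K + 1 := ⟨k - 1, by omega⟩
  show Nat.card {f : Fin (K+1) → Multiset α //
        (∀ t, Multiset.card (f t) = K) ∧ ∑ t, f t = D} * K.factorial ≤
      Nat.card {f : Fin K → Multiset α //
        (∀ t, Multiset.card (f t) = K+1) ∧ ∑ t, f t = D} * (K+1) ^ K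
  rw [Stmt18.zeta1_eq D K, Stmt18.zeta2_eq D K]
  have hchain := Stmt18.chain D K K (le_refl K)
  rw [Nat.sub_self, Nat.factorial_zero, one_mul] at hchain
  calc (Stmt18.XS D (Stmt18.cc K 0)).card * K.factorial
      = K.factorial * (Stmt18.XS D (Stmt18.cc K 0)).card := Nat.mul_comm _ _
    _ ≤ (K+1)^K * (Stmt18.XS D (Stmt18.cc K K)).card := hchain
    _ = (Stmt18.XS D (Stmt18.cc K K)).card * (K+1)^K := Nat.mul_comm _ _
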